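/- Let T = Cat(d₁, d₂, …, d_ℓ) be a caterpillar tree of length ℓ ≥ 2 and let T₋₁ = Cat(d₁, d₂, …, d_{ℓ−1}). If T₋₁ is κ-two-sided strong edge-pre-colorable for an integer κ ≥ σ(T), then T is κ-two-sided strong edge-pre-colorable. -/

import Mathlib

open SimpleGraph

/-- The degree of a vertex (cardinality of its neighbor set). -/
noncomputable def ndeg {V : Type*} (G : SimpleGraph V) (v : V) : ℕ :=
  (G.neighborSet v).ncard

/-- `σ(G)`: the maximum of `deg x + deg y - 1` over all edges `xy` of `G`. -/
noncomputable def sigmaG {V : Type*} (G : SimpleGraph V) : ℕ :=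
  sSup {m | ∃ x y, G.Adj x y ∧ m = ndeg G x + ndeg G y - 1}

/-- The maximum degree `Δ(G)`. -/
noncomputable def maxDeg {V : Type*} (G : SimpleGraph V) : ℕ :=
  sSup (Set.range (ndeg G))

/-- Two edges are at distance at most two: they share an endpoint, or an endpoint of
one is adjacent to an endpoint of the other. -/
def EdgesNear {V : Type*} (G : SimpleGraph V) (e f : Sym2 V) : Prop :=
  ∃ u v, u ∈ e ∧ v ∈ f ∧ (u = v ∨ G.Adj u v)

/-- A strong edge-coloring: every two distinct edges at distance at most two
receive different colors. -/
def IsStrongEdgeColoring {V α : Type*} (G : SimpleGraph V) (φ : Sym2 V → α) : Prop :=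
  ∀ e ∈ G.edgeSet, ∀ f ∈ G.edgeSet, e ≠ f → EdgesNear G e f → φ e ≠ φ f

/-- The strong chromatic index `χ'ₛ(G)`: the least `k` such that `G` has a strong
edge-coloring with colors `0, …, k-1`. -/
noncomputable def strongChromaticIndex {V : Type*} (G : SimpleGraph V) : ℕ :=
  sInf {k | ∃ φ : Sym2 V → ℕ, (∀ e ∈ G.edgeSet, φ e < k) ∧ IsStrongEdgeColoring G φ}

/-- The set of edges incident with a vertex `v`. -/
def Einc {V : Type*} (G : SimpleGraph V) (v : V) : Set (Sym2 V) :=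
  {e ∈ G.edgeSet | v ∈ e}
/-- The vertex type of the caterpillar tree `Cat(d 1, …, d ℓ)`: the spine
`x_0, x_1, …, x_{ℓ+1}` (as `Fin (ℓ+2)`) together with `d (i+1) - 2` pendant leaves
attached to the spine vertex `x_{i+1}` for each `i : Fin ℓ`. -/
abbrev CatV (ℓ : ℕ) (d : ℕ → ℕ) : Type :=
  Fin (ℓ + 2) ⊕ (Σ i : Fin ℓ, Fin (d (i.val + 1) - 2))

/-- Generating relation for the caterpillar: consecutive spine vertices are adjacent,
and each leaf in the `i`-th leaf group is adjacent to the spine vertex `x_{i+1}`. -/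
def CatRel (ℓ : ℕ) (d : ℕ → ℕ) : CatV ℓ d → CatV ℓ d → Prop
  | Sum.inl i, Sum.inl j => (j : ℕ) = (i : ℕ) + 1
  | Sum.inr p, Sum.inl k => (k : ℕ) = (p.1 : ℕ) + 1
  | _, _ => False

/-- The caterpillar tree `Cat(d 1, …, d ℓ)` with spine `x_0, …, x_{ℓ+1}`, in which
the spine vertex `x_i` has degree `d i` for `1 ≤ i ≤ ℓ` (provided `d i ≥ 2`). -/
def Cat (ℓ : ℕ) (d : ℕ → ℕ) : SimpleGraph (CatV ℓ d) :=
  SimpleGraph.fromRel (CatRel ℓ d)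

/-- There exists a strong edge-coloring `φ` of `Cat ℓ d` using colors from `C` with
`φ(E 1) = C₁`, `φ(E ℓ) = Cl`, `φ(x₀x₁) = α₀` and `φ(x_ℓ x_{ℓ+1}) = αl`. -/
def CatPrecolorExists (ℓ : ℕ) (d : ℕ → ℕ) (C C₁ Cl : Finset ℕ) (α₀ αl : ℕ) : Prop :=
  ∃ φ : Sym2 (CatV ℓ d) → ℕ,
    (∀ e ∈ (Cat ℓ d).edgeSet, φ e ∈ C) ∧
    IsStrongEdgeColoring (Cat ℓ d) φ ∧
    φ '' Einc (Cat ℓ d) (Sum.inl ⟨1, by omega⟩) = ↑C₁ ∧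
    φ '' Einc (Cat ℓ d) (Sum.inl ⟨ℓ, by omega⟩) = ↑Cl ∧
    φ s(Sum.inl ⟨0, by omega⟩, Sum.inl ⟨1, by omega⟩) = α₀ ∧
    φ s(Sum.inl ⟨ℓ, by omega⟩, Sum.inl ⟨ℓ + 1, by omega⟩) = αl

/-- `Cat ℓ d` is `κ`-two-sided strong edge-pre-colorable: for every `κ`-set `C` of colors,
all `C₁, Cl ⊆ C` with `|C₁| = d 1`, `|Cl| = d ℓ`, and all `α₀ ∈ C₁`, `αl ∈ Cl`, there is
a strong edge-coloring `φ` of `Cat ℓ d` with colors from `C` such that `φ(E 1) = C₁`,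
`φ(E ℓ) = Cl`, `φ(x₀x₁) = α₀` and `φ(x_ℓ x_{ℓ+1}) = αl`. -/
def TwoSidedPrecolorable (ℓ : ℕ) (d : ℕ → ℕ) (κ : ℕ) : Prop :=
  ∀ C C₁ Cl : Finset ℕ, C.card = κ → C₁ ⊆ C → Cl ⊆ C →
    C₁.card = d 1 → Cl.card = d ℓ →
    ∀ α₀ ∈ C₁, ∀ αl ∈ Cl, CatPrecolorExists ℓ d C C₁ Cl α₀ αl

/-- `ℓ_σ` from the refined key lemma: `ℓ_5 = 8`, `ℓ_6 = ℓ_7 = 7`, `ℓ_σ = σ` for `σ ≥ 8`. -/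
def ellSigma (s : ℕ) : ℕ :=
  if s = 5 then 8 else if s ≤ 7 then 7 else s



section Basic
variable {L : ℕ} {d : ℕ → ℕ}

lemma cat_adj_inl_inl {a b : Fin (L+2)} :
    (Cat L d).Adj (Sum.inl a) (Sum.inl b) ↔ ((b:ℕ) = a + 1 ∨ (a:ℕ) = b + 1) := by
  simp only [Cat, fromRel_adj, CatRel, ne_eq, Sum.inl.injEq, Fin.ext_iff]
  omega

lemma cat_adj_inl_inr {a : Fin (L+2)} {p : Σ i : Fin L, Fin (d (i.val + 1) - 2)} :
    (Cat L d).Adj (Sum.inl a) (Sum.inr p) ↔ (a:ℕ) = (p.1:ℕ) + 1 := by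
  simp only [Cat, fromRel_adj, CatRel, ne_eq]
  simp

lemma cat_adj_inr_inl {a : Fin (L+2)} {p : Σ i : Fin L, Fin (d (i.val + 1) - 2)} :
    (Cat L d).Adj (Sum.inr p) (Sum.inl a) ↔ (a:ℕ) = (p.1:ℕ) + 1 := by
  rw [adj_comm]; exact cat_adj_inl_inr

lemma cat_not_adj_inr_inr {p q : Σ i : Fin L, Fin (d (i.val + 1) - 2)} :
    ¬ (Cat L d).Adj (Sum.inr p) (Sum.inr q) := by
  simp [Cat, fromRel_adj, CatRel]

lemma near_symm {V : Type*} {G : SimpleGraph V} {e f : Sym2 V} (h : EdgesNear G e f) :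
    EdgesNear G f e := by
  obtain ⟨u, v, hu, hv, huv⟩ := h
  exact ⟨v, u, hv, hu, by rcases huv with h | h; exact Or.inl h.symm; exact Or.inr h.symm⟩
end Basic

section Ext
variable (m : ℕ) (d : ℕ → ℕ)

/-- projection from `Cat (m+1) d` vertices to `Cat m d` vertices -/
def catPi : CatV (m+1) d → CatV m d
  | Sum.inl a => Sum.inl ⟨min a.val (m+1), by omega⟩
  | Sum.inr ⟨i, j⟩ => if h : i.val < m then Sum.inr ⟨⟨i.val, h⟩, j⟩ else Sum.inl ⟨0, by omega⟩

/-- inclusion of `Cat m d` vertices into `Cat (m+1) d` vertices -/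
def catIota : CatV m d → CatV (m+1) d
  | Sum.inl a => Sum.inl ⟨a.val, by omega⟩
  | Sum.inr ⟨i, j⟩ => Sum.inr ⟨⟨i.val, by omega⟩, j⟩

/-- old vertices: those coming from `Cat m d` -/
def COld : CatV (m+1) d → Prop
  | Sum.inl a => a.val ≤ m+1
  | Sum.inr p => p.1.val < m

abbrev xtop : CatV (m+1) d := Sum.inl ⟨m+1, by omega⟩
abbrev xlast : CatV (m+1) d := Sum.inl ⟨m+2, by omega⟩
abbrev xmid : CatV (m+1) d := Sum.inl ⟨m, by omega⟩
abbrev cleaf (j : Fin (d (m+1) - 2)) : CatV (m+1) d := Sum.inr ⟨⟨m, by omega⟩, j⟩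

variable {m d}

lemma catPi_inl {k : ℕ} (h : k < m + 3) (h2 : k ≤ m + 1) :
    catPi m d (Sum.inl ⟨k, h⟩) = Sum.inl ⟨k, by omega⟩ := by
  simp only [catPi]
  congr 1
  exact Fin.ext (by simp; omega)

lemma catPi_iota (w : CatV m d) : catPi m d (catIota m d w) = w := by
  cases w with
  | inl a => exact (catPi_inl _ (by omega)).trans (by simp)
  | inr p => obtain ⟨⟨iv, hi⟩, j⟩ := p; simp [catPi, catIota, hi]

lemma cold_iota (w : CatV m d) : COld m d (catIota m d w) := by
  cases w with
  | inl a => simpa [catIota, COld] using by omega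
  | inr p => obtain ⟨⟨iv, hi⟩, j⟩ := p; simpa [catIota, COld] using hi

lemma iota_catPi {u : CatV (m+1) d} (h : COld m d u) : catIota m d (catPi m d u) = u := by
  cases u with
  | inl a =>
    have : (a : ℕ) ≤ m + 1 := h
    rw [catPi_inl a.isLt this]
    simp [catIota]
  | inr p =>
    obtain ⟨⟨iv, hi⟩, j⟩ := p
    have : iv < m := h
    simp [catPi, catIota, this]

lemma catPi_injOn {u v : CatV (m+1) d} (hu : COld m d u) (hv : COld m d v)
    (h : catPi m d u = catPi m d v) : u = v := by
  rw [← iota_catPi hu, ← iota_catPi hv, h]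

lemma adj_down {u v : CatV (m+1) d} (hu : COld m d u) (hv : COld m d v)
    (h : (Cat (m+1) d).Adj u v) : (Cat m d).Adj (catPi m d u) (catPi m d v) := by
  cases u with
  | inl a =>
    have ha : (a:ℕ) ≤ m + 1 := hu
    rw [catPi_inl a.isLt ha]
    cases v with
    | inl b =>
      have hb : (b:ℕ) ≤ m + 1 := hv
      rw [catPi_inl b.isLt hb]
      rw [cat_adj_inl_inl] at h ⊢
      simpa using h
    | inr p =>
      obtain ⟨⟨iv, hi⟩, j⟩ := p
      have hio : iv < m := hv
      rw [cat_adj_inl_inr] at h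
      simp only [catPi, hio, dif_pos]
      rw [cat_adj_inl_inr]
      simpa using h
  | inr p =>
    obtain ⟨⟨iv, hi⟩, j⟩ := p
    have hio : iv < m := hu
    cases v with
    | inl b =>
      have hb : (b:ℕ) ≤ m + 1 := hv
      rw [catPi_inl b.isLt hb]
      rw [cat_adj_inr_inl] at h
      simp only [catPi, hio, dif_pos]
      rw [cat_adj_inr_inl]
      simpa using h
    | inr q => exact absurd h cat_not_adj_inr_inr

lemma adj_up {w z : CatV m d} (h : (Cat m d).Adj w z) :
    (Cat (m+1) d).Adj (catIota m d w) (catIota m d z) := by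
  cases w with
  | inl a =>
    cases z with
    | inl b =>
      simp only [catIota]
      rw [cat_adj_inl_inl] at h ⊢
      simpa using h
    | inr p =>
      obtain ⟨⟨iv, hi⟩, j⟩ := p
      simp only [catIota]
      rw [cat_adj_inl_inr] at h ⊢
      simpa using h
  | inr p =>
    obtain ⟨⟨iv, hi⟩, j⟩ := p
    cases z with
    | inl b =>
      simp only [catIota]
      rw [cat_adj_inr_inl] at h ⊢
      simpa using h
    | inr q => exact absurd h cat_not_adj_inr_inr

/-- classification of edges incident to a non-old vertex -/
lemma new_adj {u v : CatV (m+1) d} (h : (Cat (m+1) d).Adj u v) (hu : ¬ COld m d u) :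
    v = xtop m d ∧ (u = xlast m d ∨ ∃ j, u = cleaf m d j) := by
  cases u with
  | inl a =>
    have ha : (a:ℕ) = m + 2 := by
      have := a.isLt
      simp only [COld, not_le] at hu
      omega
    refine ⟨?_, Or.inl (congrArg Sum.inl (Fin.ext ha))⟩
    cases v with
    | inl b =>
      rw [cat_adj_inl_inl] at h
      have hb := b.isLt
      have : (b:ℕ) = m + 1 := by omega
      exact congrArg Sum.inl (Fin.ext this)
    | inr p =>
      rw [cat_adj_inl_inr] at h
      have := p.1.isLt
      omega
  | inr p =>
    obtain ⟨⟨iv, hi⟩, j⟩ := p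
    have hiv : iv = m := by
      simp only [COld, not_lt] at hu
      omega
    have hty : d (iv + 1) - 2 = d (m + 1) - 2 := by rw [hiv]
    refine ⟨?_, Or.inr ⟨⟨j.val, hty ▸ j.isLt⟩, congrArg Sum.inr
      (Sigma.ext (Fin.ext (by simpa using hiv)) ((Fin.heq_ext_iff hty).2 rfl))⟩⟩
    cases v with
    | inl b =>
      rw [cat_adj_inr_inl] at h
      have : (b:ℕ) = m + 1 := by simp at h; omega
      exact congrArg Sum.inl (Fin.ext this)
    | inr q => exact absurd h cat_not_adj_inr_inr

lemma old_xtop : COld m d (xtop m d) := by simp [COld]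
lemma old_xmid : COld m d (xmid m d) := by simp [COld]
lemma not_old_xlast : ¬ COld m d (xlast m d) := by simp [COld]
lemma not_old_cleaf (j : Fin (d (m+1) - 2)) : ¬ COld m d (cleaf m d j) := by simp [COld]

lemma old_adj_xtop {v : CatV (m+1) d} (h : (Cat (m+1) d).Adj (xtop m d) v)
    (hv : COld m d v) : v = xmid m d := by
  cases v with
  | inl b =>
    rw [cat_adj_inl_inl] at h
    have hb : (b:ℕ) ≤ m + 1 := hv
    have : (b:ℕ) = m := by simp at h; omega
    exact congrArg Sum.inl (Fin.ext this)
  | inr p =>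
    rw [cat_adj_inl_inr] at h
    have : (p.1:ℕ) < m := hv
    simp at h
    omega

lemma adj_xlast {u : CatV (m+1) d} (h : (Cat (m+1) d).Adj u (xlast m d)) : u = xtop m d := by
  cases u with
  | inl b =>
    rw [cat_adj_inl_inl] at h
    have hb := b.isLt
    have : (b:ℕ) = m + 1 := by simp at h; omega
    exact congrArg Sum.inl (Fin.ext this)
  | inr p =>
    rw [cat_adj_inr_inl] at h
    have := p.1.isLt
    simp at h
    omega

lemma adj_cleaf {u : CatV (m+1) d} {j : Fin (d (m+1) - 2)}
    (h : (Cat (m+1) d).Adj u (cleaf m d j)) : u = xtop m d := by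
  cases u with
  | inl b =>
    rw [cat_adj_inl_inr] at h
    have : (b:ℕ) = m + 1 := by simpa using h
    exact congrArg Sum.inl (Fin.ext this)
  | inr p => exact absurd h cat_not_adj_inr_inr

/-- classification of all edges of `Cat (m+1) d` -/
lemma edge_classify {e : Sym2 (CatV (m+1) d)} (he : e ∈ (Cat (m+1) d).edgeSet) :
    (∃ u v, e = s(u, v) ∧ (Cat (m+1) d).Adj u v ∧ COld m d u ∧ COld m d v) ∨
      e = s(xtop m d, xlast m d) ∨ ∃ j, e = s(xtop m d, cleaf m d j) := by
  induction e with
  | _ u v =>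
    rw [mem_edgeSet] at he
    by_cases hu : COld m d u
    · by_cases hv : COld m d v
      · exact Or.inl ⟨u, v, rfl, he, hu, hv⟩
      · obtain ⟨rfl, hh⟩ := new_adj he.symm hv
        rcases hh with rfl | ⟨j, rfl⟩
        · exact Or.inr (Or.inl rfl)
        · exact Or.inr (Or.inr ⟨j, rfl⟩)
    · obtain ⟨rfl, hh⟩ := new_adj he hu
      rcases hh with rfl | ⟨j, rfl⟩
      · exact Or.inr (Or.inl (Sym2.eq_swap))
      · exact Or.inr (Or.inr ⟨j, Sym2.eq_swap⟩)
end Ext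

section Color
variable (m : ℕ) (d : ℕ → ℕ) (αl : ℕ) (g : ℕ → ℕ) (φ' : Sym2 (CatV m d) → ℕ)

def lIdx : CatV (m+1) d → Option ℕ
  | Sum.inr ⟨i, j⟩ => if i.val = m then some j.val else none
  | Sum.inl _ => none

def extF (u v : CatV (m+1) d) : ℕ :=
  if u = xlast m d ∨ v = xlast m d then αl
  else
    (lIdx m d u).elim ((lIdx m d v).elim (φ' s(catPi m d u, catPi m d v)) g)
      (fun n => (lIdx m d v).elim (g n) (fun n' => g (max n n')))

lemma extF_symm (u v : CatV (m+1) d) :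
    extF m d αl g φ' u v = extF m d αl g φ' v u := by
  unfold extF
  by_cases h : u = xlast m d ∨ v = xlast m d
  · rw [if_pos h, if_pos (Or.symm h)]
  · rw [if_neg h, if_neg (fun hh => h (Or.symm hh))]
    rcases h1 : lIdx m d u with _ | n <;> rcases h2 : lIdx m d v with _ | n' <;>
      simp [max_comm, Sym2.eq_swap]

noncomputable def extPhi : Sym2 (CatV (m+1) d) → ℕ :=
  Sym2.lift ⟨fun u v => extF m d αl g φ' u v, extF_symm m d αl g φ'⟩

variable {m d} {αl} {g} {φ'}

lemma lIdx_old {u : CatV (m+1) d} (h : COld m d u) : lIdx m d u = none := by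
  cases u with
  | inl a => rfl
  | inr p =>
    obtain ⟨⟨iv, hi⟩, j⟩ := p
    have : iv < m := h
    simp [lIdx]
    omega

lemma old_ne_xlast {u : CatV (m+1) d} (h : COld m d u) : u ≠ xlast m d := by
  intro hh
  subst hh
  exact not_old_xlast h

lemma extPhi_old {u v : CatV (m+1) d} (hu : COld m d u) (hv : COld m d v) :
    extPhi m d αl g φ' s(u, v) = φ' s(catPi m d u, catPi m d v) := by
  show extF m d αl g φ' u v = _
  unfold extF
  rw [if_neg (by push_neg; exact ⟨old_ne_xlast hu, old_ne_xlast hv⟩),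
    lIdx_old hu, lIdx_old hv]
  rfl

lemma extPhi_N1 {u : CatV (m+1) d} :
    extPhi m d αl g φ' s(u, xlast m d) = αl := by
  show extF m d αl g φ' u (xlast m d) = _
  unfold extF
  rw [if_pos (Or.inr rfl)]

lemma lIdx_cleaf (j : Fin (d (m+1) - 2)) : lIdx m d (cleaf m d j) = some j.val := by
  simp [lIdx]

lemma extPhi_N2 (j : Fin (d (m+1) - 2)) :
    extPhi m d αl g φ' s(xtop m d, cleaf m d j) = g j.val := by
  show extF m d αl g φ' (xtop m d) (cleaf m d j) = _
  unfold extF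
  rw [if_neg (by
    push_neg
    refine ⟨old_ne_xlast old_xtop, ?_⟩
    simp), lIdx_old old_xtop, lIdx_cleaf]
  rfl

lemma oldEdge_color_mem {Cm : Finset ℕ}
    (hEm : φ' '' Einc (Cat m d) (Sum.inl ⟨m, by omega⟩) = ↑Cm)
    {u v : CatV (m+1) d} (hadj : (Cat (m+1) d).Adj u v)
    (hu : COld m d u) (hv : COld m d v)
    (hx : u = xmid m d ∨ v = xmid m d ∨ u = xtop m d ∨ v = xtop m d) :
    φ' s(catPi m d u, catPi m d v) ∈ Cm := by
  have hmem : s(catPi m d u, catPi m d v) ∈ Einc (Cat m d) (Sum.inl ⟨m, by omega⟩) := by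
    refine ⟨(mem_edgeSet _).2 (adj_down hu hv hadj), ?_⟩
    have hmid : catPi m d (xmid m d) = Sum.inl ⟨m, by omega⟩ := catPi_inl _ (by omega)
    rcases hx with rfl | rfl | rfl | rfl
    · rw [Sym2.mem_iff]; exact Or.inl hmid.symm
    · rw [Sym2.mem_iff]; exact Or.inr hmid.symm
    · have hvm := old_adj_xtop hadj hv
      rw [hvm, Sym2.mem_iff]
      exact Or.inr hmid.symm
    · have hum := old_adj_xtop hadj.symm hu
      rw [hum, Sym2.mem_iff]
      exact Or.inl hmid.symm
  have : φ' s(catPi m d u, catPi m d v) ∈ (↑Cm : Set ℕ) := by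
    rw [← hEm]; exact ⟨_, hmem, rfl⟩
  exact_mod_cast this

lemma old_near_new {u v : CatV (m+1) d} (hadj : (Cat (m+1) d).Adj u v)
    (hu : COld m d u) (hv : COld m d v) {f : Sym2 (CatV (m+1) d)}
    (hf : f = s(xtop m d, xlast m d) ∨ ∃ j, f = s(xtop m d, cleaf m d j))
    (hnear : EdgesNear (Cat (m+1) d) s(u, v) f) :
    u = xmid m d ∨ v = xmid m d ∨ u = xtop m d ∨ v = xtop m d := by
  obtain ⟨p, q, hp, hq, hpq⟩ := hnear
  rw [Sym2.mem_iff] at hp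
  have hpo : COld m d p := by rcases hp with rfl | rfl <;> assumption
  have hxtop : p = xtop m d → u = xmid m d ∨ v = xmid m d ∨ u = xtop m d ∨ v = xtop m d := by
    rintro rfl
    rcases hp with rfl | rfl
    · exact Or.inr (Or.inr (Or.inl rfl))
    · exact Or.inr (Or.inr (Or.inr rfl))
  have hxmid : p = xmid m d → u = xmid m d ∨ v = xmid m d ∨ u = xtop m d ∨ v = xtop m d := by
    rintro rfl
    rcases hp with rfl | rfl
    · exact Or.inl rfl
    · exact Or.inr (Or.inl rfl)
  rcases hf with rfl | ⟨j, rfl⟩ <;> rw [Sym2.mem_iff] at hq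
  · rcases hq with rfl | rfl
    · rcases hpq with rfl | hpq
      · exact hxtop rfl
      · exact hxmid (old_adj_xtop hpq.symm hpo)
    · rcases hpq with rfl | hpq
      · exact absurd hpo not_old_xlast
      · exact hxtop (adj_xlast hpq)
  · rcases hq with rfl | rfl
    · rcases hpq with rfl | hpq
      · exact hxtop rfl
      · exact hxmid (old_adj_xtop hpq.symm hpo)
    · rcases hpq with rfl | hpq
      · exact absurd hpo (not_old_cleaf j)
      · exact hxtop (adj_cleaf hpq)

lemma near_down {u v w z : CatV (m+1) d}
    (hu : COld m d u) (hv : COld m d v) (hw : COld m d w) (hz : COld m d z)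
    (hnear : EdgesNear (Cat (m+1) d) s(u, v) s(w, z)) :
    EdgesNear (Cat m d) s(catPi m d u, catPi m d v) s(catPi m d w, catPi m d z) := by
  obtain ⟨p, q, hp, hq, hpq⟩ := hnear
  rw [Sym2.mem_iff] at hp hq
  have hpo : COld m d p := by rcases hp with rfl | rfl <;> assumption
  have hqo : COld m d q := by rcases hq with rfl | rfl <;> assumption
  refine ⟨catPi m d p, catPi m d q, ?_, ?_, ?_⟩
  · rw [Sym2.mem_iff]; rcases hp with rfl | rfl
    · exact Or.inl rfl
    · exact Or.inr rfl
  · rw [Sym2.mem_iff]; rcases hq with rfl | rfl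
    · exact Or.inl rfl
    · exact Or.inr rfl
  · rcases hpq with rfl | hpq
    · exact Or.inl rfl
    · exact Or.inr (adj_down hpo hqo hpq)

end Color

section Main
variable {m : ℕ} {d : ℕ → ℕ}

lemma old_inl {k : ℕ} (h : k < m + 3) (h2 : k ≤ m + 1) :
    COld m d (Sum.inl ⟨k, h⟩ : CatV (m+1) d) := h2

lemma adj_x1_old (hm1 : 1 ≤ m) {w : CatV (m+1) d}
    (h : (Cat (m+1) d).Adj (Sum.inl ⟨1, by omega⟩) w) : COld m d w := by
  cases w with
  | inl b =>
    rw [cat_adj_inl_inl] at h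
    show (b:ℕ) ≤ m + 1
    change (b:ℕ) = 1 + 1 ∨ 1 = (b:ℕ) + 1 at h
    omega
  | inr p =>
    rw [cat_adj_inl_inr] at h
    show (p.1:ℕ) < m
    change 1 = (p.1:ℕ) + 1 at h
    omega

lemma map_iota_phi (αl : ℕ) (g : ℕ → ℕ) (φ' : Sym2 (CatV m d) → ℕ)
    (e : Sym2 (CatV m d)) :
    extPhi m d αl g φ' (Sym2.map (catIota m d) e) = φ' e := by
  induction e with
  | _ a b =>
    rw [Sym2.map_pair_eq, extPhi_old (cold_iota a) (cold_iota b), catPi_iota, catPi_iota]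

lemma Einc_x1_eq (hm1 : 1 ≤ m) :
    Einc (Cat (m+1) d) (Sum.inl ⟨1, by omega⟩) =
      Sym2.map (catIota m d) '' Einc (Cat m d) (Sum.inl ⟨1, by omega⟩) := by
  apply Set.eq_of_subset_of_subset
  · intro e
    induction e with
    | _ u v =>
      rintro ⟨he, hm⟩
      rw [mem_edgeSet] at he
      have key : ∀ w : CatV (m+1) d, (Cat (m+1) d).Adj (Sum.inl ⟨1, by omega⟩) w →
          s(Sum.inl ⟨1, by omega⟩, w) ∈
            Sym2.map (catIota m d) '' Einc (Cat m d) (Sum.inl ⟨1, by omega⟩) := by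
        intro w hw
        have hwo : COld m d w := adj_x1_old hm1 hw
        have h1o : COld m d (Sum.inl ⟨1, by omega⟩ : CatV (m+1) d) :=
          old_inl (k := 1) (by omega) (by omega)
        refine ⟨s(Sum.inl ⟨1, by omega⟩, catPi m d w), ⟨?_, ?_⟩, ?_⟩
        · rw [mem_edgeSet]
          have := adj_down h1o hwo hw
          rwa [catPi_inl _ (by omega)] at this
        · rw [Sym2.mem_iff]; exact Or.inl rfl
        · rw [Sym2.map_pair_eq, iota_catPi hwo]
          rfl
      rw [Sym2.mem_iff] at hm
      rcases hm with rfl | rfl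
      · exact key v he
      · exact Set.mem_of_eq_of_mem Sym2.eq_swap (key u he.symm)
  · rintro e ⟨e', he', rfl⟩
    obtain ⟨he'e, he'm⟩ := he'
    induction e' with
    | _ a b =>
      rw [mem_edgeSet] at he'e
      refine ⟨?_, ?_⟩
      · rw [Sym2.map_pair_eq, mem_edgeSet]
        exact adj_up he'e
      · rw [Sym2.map_pair_eq, Sym2.mem_iff]
        rw [Sym2.mem_iff] at he'm
        rcases he'm with rfl | rfl
        · exact Or.inl rfl
        · exact Or.inr rfl

lemma Einc_xtop_eq :
    Einc (Cat (m+1) d) (xtop m d) =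
      {s(xmid m d, xtop m d)} ∪ ({s(xtop m d, xlast m d)} ∪
        Set.range (fun j => s(xtop m d, cleaf m d j))) := by
  apply Set.eq_of_subset_of_subset
  · intro e
    induction e with
    | _ u v =>
      rintro ⟨he, hm⟩
      rw [mem_edgeSet] at he
      have key : ∀ w : CatV (m+1) d, (Cat (m+1) d).Adj (xtop m d) w →
          s(xtop m d, w) ∈ ({s(xmid m d, xtop m d)} ∪ ({s(xtop m d, xlast m d)} ∪
            Set.range (fun j => s(xtop m d, cleaf m d j))) :
              Set (Sym2 (CatV (m+1) d))) := by
        intro w hw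
        simp only [Set.mem_union, Set.mem_singleton_iff, Set.mem_range]
        by_cases hwo : COld m d w
        · have := old_adj_xtop hw hwo
          subst this
          exact Or.inl Sym2.eq_swap
        · obtain ⟨-, hh⟩ := new_adj hw.symm hwo
          rcases hh with rfl | ⟨j, rfl⟩
          · exact Or.inr (Or.inl rfl)
          · exact Or.inr (Or.inr ⟨j, rfl⟩)
      rw [Sym2.mem_iff] at hm
      rcases hm with rfl | rfl
      · exact key v he
      · exact Set.mem_of_eq_of_mem Sym2.eq_swap (key u he.symm)
  · intro e he
    simp only [Set.mem_union, Set.mem_singleton_iff, Set.mem_range] at he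
    rcases he with rfl | rfl | ⟨j, rfl⟩
    · refine ⟨?_, ?_⟩
      · rw [mem_edgeSet, cat_adj_inl_inl]
        simp
      · rw [Sym2.mem_iff]; exact Or.inr rfl
    · refine ⟨?_, ?_⟩
      · rw [mem_edgeSet, cat_adj_inl_inl]
        simp
      · rw [Sym2.mem_iff]; exact Or.inl rfl
    · refine ⟨?_, ?_⟩
      · rw [mem_edgeSet, cat_adj_inl_inr]
      · rw [Sym2.mem_iff]; exact Or.inl rfl

theorem key (m : ℕ) (hm1 : 1 ≤ m) (d : ℕ → ℕ) (hdm : 2 ≤ d m) (hdl : 2 ≤ d (m+1))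
    (κ : ℕ) (hκ : d m + d (m+1) - 1 ≤ κ) (h : TwoSidedPrecolorable m d κ) :
    TwoSidedPrecolorable (m+1) d κ := by
  intro C C₁ Cl hC hC₁C hClC hcard1 hcardl α₀ hα₀ αl hαl
  -- choose α'
  obtain ⟨α', hα'⟩ : (Cl.erase αl).Nonempty := by
    rw [← Finset.card_pos, Finset.card_erase_of_mem hαl, hcardl]
    omega
  have hα'Cl : α' ∈ Cl := Finset.mem_of_mem_erase hα'
  have hα'ne : α' ≠ αl := Finset.ne_of_mem_erase hα'
  -- choose the color set Cm for the shorter caterpillar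
  obtain ⟨S, hS_sub, hS_card⟩ := Finset.exists_subset_card_eq
    (show d m - 1 ≤ (C \ Cl).card by rw [Finset.card_sdiff_of_subset hClC, hC, hcardl]; omega)
  have hα'S : α' ∉ S := fun hh => (Finset.mem_sdiff.1 (hS_sub hh)).2 hα'Cl
  set Cm : Finset ℕ := insert α' S with hCm_def
  have hCm_card : Cm.card = d m := by
    rw [hCm_def, Finset.card_insert_of_notMem hα'S, hS_card]
    omega
  have hCmC : Cm ⊆ C := by
    rw [hCm_def]
    exact Finset.insert_subset (hClC hα'Cl) (hS_sub.trans (Finset.sdiff_subset))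
  have hCmCl : ∀ c ∈ Cm, c ∈ Cl → c = α' := by
    intro c hc hcl
    rcases Finset.mem_insert.1 hc with rfl | hcS
    · rfl
    · exact absurd hcl (Finset.mem_sdiff.1 (hS_sub hcS)).2
  have hα'Cm : α' ∈ Cm := Finset.mem_insert_self _ _
  -- color the shorter caterpillar
  obtain ⟨φ', hφC, hφS, hφE1, hφEm, hφ01, hφlast⟩ :=
    h C C₁ Cm hC hC₁C hCmC hcard1 hCm_card α₀ hα₀ α' hα'Cm
  -- the injection g onto the new leaf colors
  set s : Finset ℕ := (Cl.erase αl).erase α' with hs_def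
  have hs_card : s.card = d (m+1) - 2 := by
    rw [hs_def, Finset.card_erase_of_mem hα', Finset.card_erase_of_mem hαl, hcardl]
    omega
  set g : ℕ → ℕ := fun n =>
    if hn : n < d (m+1) - 2 then (s.orderIsoOfFin hs_card ⟨n, hn⟩ : ℕ) else 0 with hg_def
  have hg_mem : ∀ n, n < d (m+1) - 2 → g n ∈ s := by
    intro n hn
    rw [hg_def]
    simp only [dif_pos hn]
    exact (s.orderIsoOfFin hs_card ⟨n, hn⟩).2
  have hg_inj : ∀ n n', n < d (m+1) - 2 → n' < d (m+1) - 2 → g n = g n' → n = n' := by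
    intro n n' hn hn' heq
    rw [hg_def] at heq
    simp only [dif_pos hn, dif_pos hn'] at heq
    have := (s.orderIsoOfFin hs_card).injective (Subtype.coe_injective heq)
    simpa using congrArg Fin.val this
  have hg_surj : ∀ c ∈ s, ∃ n, ∃ hn : n < d (m+1) - 2, g n = c := by
    intro c hc
    refine ⟨((s.orderIsoOfFin hs_card).symm ⟨c, hc⟩ : Fin _).val,
      ((s.orderIsoOfFin hs_card).symm ⟨c, hc⟩ : Fin _).isLt, ?_⟩
    rw [hg_def]
    simp only [dif_pos ((s.orderIsoOfFin hs_card).symm ⟨c, hc⟩ : Fin _).isLt, Fin.eta,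
      OrderIso.apply_symm_apply]
  have hgCl : ∀ n, n < d (m+1) - 2 → g n ∈ Cl :=
    fun n hn => Finset.mem_of_mem_erase (Finset.mem_of_mem_erase (hg_mem n hn))
  have hg_ne_α' : ∀ n, n < d (m+1) - 2 → g n ≠ α' :=
    fun n hn => Finset.ne_of_mem_erase (hg_mem n hn)
  have hg_ne_αl : ∀ n, n < d (m+1) - 2 → g n ≠ αl :=
    fun n hn => Finset.ne_of_mem_erase (Finset.mem_of_mem_erase (hg_mem n hn))
  -- the extended coloring
  refine ⟨extPhi m d αl g φ', ?_, ?_, ?_, ?_, ?_, ?_⟩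
  · -- colors in C
    intro e he
    rcases edge_classify he with ⟨u, v, rfl, hadj, hu, hv⟩ | rfl | ⟨j, rfl⟩
    · rw [extPhi_old hu hv]
      exact hφC _ ((mem_edgeSet _).2 (adj_down hu hv hadj))
    · rw [extPhi_N1]
      exact hClC hαl
    · rw [extPhi_N2]
      exact hClC (hgCl _ j.isLt)
  · -- strong edge-coloring
    intro e he f hf hne hnear
    have oldnew : ∀ u v : CatV (m+1) d, (Cat (m+1) d).Adj u v → COld m d u → COld m d v →
        ∀ f' : Sym2 (CatV (m+1) d),
          (f' = s(xtop m d, xlast m d) ∨ ∃ j, f' = s(xtop m d, cleaf m d j)) →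
          EdgesNear (Cat (m+1) d) s(u, v) f' → φ' s(catPi m d u, catPi m d v) ∈ Cm :=
      fun u v hadj hu hv f' hf' hn =>
        oldEdge_color_mem hφEm hadj hu hv (old_near_new hadj hu hv hf' hn)
    rcases edge_classify he with ⟨u, v, rfl, hadj, hu, hv⟩ | rfl | ⟨j, rfl⟩ <;>
      rcases edge_classify hf with ⟨w, z, rfl, hadj2, hw, hz⟩ | rfl | ⟨j2, rfl⟩
    · -- old-old
      rw [extPhi_old hu hv, extPhi_old hw hz]
      refine hφS _ ((mem_edgeSet _).2 (adj_down hu hv hadj)) _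
        ((mem_edgeSet _).2 (adj_down hw hz hadj2)) ?_ (near_down hu hv hw hz hnear)
      intro heq
      apply hne
      rcases Sym2.eq_iff.1 heq with ⟨h1, h2⟩ | ⟨h1, h2⟩
      · rw [catPi_injOn hu hw h1, catPi_injOn hv hz h2]
      · rw [catPi_injOn hu hz h1, catPi_injOn hv hw h2, Sym2.eq_swap]
    · -- old vs N1
      rw [extPhi_old hu hv, extPhi_N1]
      intro heq
      have hmem := oldnew u v hadj hu hv _ (Or.inl rfl) hnear
      rw [heq] at hmem
      exact hα'ne (hCmCl αl hmem hαl).symm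
    · -- old vs N2
      rw [extPhi_old hu hv, extPhi_N2]
      intro heq
      have hmem := oldnew u v hadj hu hv _ (Or.inr ⟨j2, rfl⟩) hnear
      rw [heq] at hmem
      exact hg_ne_α' _ j2.isLt (hCmCl _ hmem (hgCl _ j2.isLt))
    · -- N1 vs old
      rw [extPhi_N1, extPhi_old hw hz]
      intro heq
      have hmem := oldnew w z hadj2 hw hz _ (Or.inl rfl) (near_symm hnear)
      rw [← heq] at hmem
      exact hα'ne (hCmCl αl hmem hαl).symm
    · -- N1 vs N1
      exact absurd rfl hne
    · -- N1 vs N2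
      rw [extPhi_N1, extPhi_N2]
      intro heq
      exact hg_ne_αl _ j2.isLt heq.symm
    · -- N2 vs old
      rw [extPhi_N2, extPhi_old hw hz]
      intro heq
      have hmem := oldnew w z hadj2 hw hz _ (Or.inr ⟨j, rfl⟩) (near_symm hnear)
      rw [← heq] at hmem
      exact hg_ne_α' _ j.isLt (hCmCl _ hmem (hgCl _ j.isLt))
    · -- N2 vs N1
      rw [extPhi_N2, extPhi_N1]
      intro heq
      exact hg_ne_αl _ j.isLt heq
    · -- N2 vs N2
      rw [extPhi_N2, extPhi_N2]
      intro heq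
      apply hne
      have : (j : ℕ) = (j2 : ℕ) := hg_inj _ _ j.isLt j2.isLt heq
      rw [Fin.ext this]
  · -- E1 image
    show extPhi m d αl g φ' '' Einc (Cat (m+1) d) (Sum.inl ⟨1, by omega⟩) = ↑C₁
    rw [Einc_x1_eq hm1, Set.image_image]
    rw [Set.image_congr' (map_iota_phi αl g φ')]
    exact hφE1
  · -- El image
    show extPhi m d αl g φ' '' Einc (Cat (m+1) d) (xtop m d) = ↑Cl
    rw [Einc_xtop_eq, Set.image_union, Set.image_union, Set.image_singleton,
      Set.image_singleton]
    have h1 : extPhi m d αl g φ' s(xmid m d, xtop m d) = α' := by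
      rw [extPhi_old old_xmid old_xtop,
        catPi_inl _ (by omega : m ≤ m + 1), catPi_inl _ (by omega : m + 1 ≤ m + 1)]
      exact hφlast
    have h2 : extPhi m d αl g φ' s(xtop m d, xlast m d) = αl := extPhi_N1
    have h3 : extPhi m d αl g φ' '' Set.range (fun j => s(xtop m d, cleaf m d j)) =
        ↑s := by
      apply Set.eq_of_subset_of_subset
      · rintro c ⟨e, ⟨j, rfl⟩, rfl⟩
        rw [extPhi_N2]
        exact hg_mem _ j.isLt
      · intro c hc
        obtain ⟨n, hn, hgn⟩ := hg_surj c hc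
        exact ⟨s(xtop m d, cleaf m d ⟨n, hn⟩), ⟨⟨n, hn⟩, rfl⟩, by rw [extPhi_N2]; exact hgn⟩
    rw [h1, h2, h3]
    ext c
    simp only [Set.mem_union, Set.mem_singleton_iff, Finset.mem_coe, hs_def,
      Finset.mem_erase, ne_eq]
    constructor
    · rintro (rfl | rfl | ⟨-, -, hcl⟩)
      · exact hα'Cl
      · exact hαl
      · exact hcl
    · intro hcl
      by_cases h1 : c = α'
      · exact Or.inl h1
      · by_cases h2 : c = αl
        · exact Or.inr (Or.inl h2)
        · exact Or.inr (Or.inr ⟨h1, h2, hcl⟩)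
  · -- x0 x1 edge
    show extPhi m d αl g φ' s(Sum.inl ⟨0, by omega⟩, Sum.inl ⟨1, by omega⟩) = α₀
    rw [extPhi_old (old_inl (k := 0) (by omega) (by omega))
        (old_inl (k := 1) (by omega) (by omega)),
      catPi_inl _ (by omega : 0 ≤ m + 1), catPi_inl _ (by omega : 1 ≤ m + 1)]
    exact hφ01
  · -- last edge
    exact extPhi_N1
end Main

lemma neighborSet_spine {L : ℕ} {d : ℕ → ℕ} {a : Fin (L+2)} (h1 : 1 ≤ (a:ℕ)) (h2 : (a:ℕ) ≤ L) :
    (Cat L d).neighborSet (Sum.inl a) =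
      {Sum.inl ⟨a - 1, by omega⟩, Sum.inl ⟨a + 1, by omega⟩} ∪
        Set.range (fun j : Fin (d ((a:ℕ) - 1 + 1) - 2) =>
          (Sum.inr ⟨⟨(a:ℕ) - 1, by omega⟩, j⟩ : CatV L d)) := by
  ext v
  cases v with
  | inl b =>
    simp only [mem_neighborSet, cat_adj_inl_inl, Set.mem_union, Set.mem_insert_iff,
      Set.mem_singleton_iff, Set.mem_range, Sum.inl.injEq, Fin.ext_iff]
    constructor
    · rintro (h | h)
      · left; right; omega
      · left; left; omega
    · rintro ((h | h) | ⟨x, hx⟩)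
      · right; omega
      · left; omega
      · exact absurd hx (by simp)
  | inr p =>
    obtain ⟨⟨iv, hiv⟩, j⟩ := p
    simp only [mem_neighborSet, cat_adj_inl_inr, Set.mem_union, Set.mem_insert_iff,
      Set.mem_singleton_iff, Set.mem_range]
    constructor
    · intro hh
      have hh' : (a:ℕ) = iv + 1 := hh
      right
      have hiv2 : iv = (a:ℕ) - 1 := by omega
      subst hiv2
      exact ⟨j, rfl⟩
    · rintro ((h | h) | ⟨x, hx⟩)
      · exact absurd h (by simp)
      · exact absurd h (by simp)
      · simp only [Sum.inr.injEq] at hx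
        have h5 := congrArg (fun q : (Σ i : Fin L, Fin (d (i.val + 1) - 2)) => (q.1 : ℕ)) hx
        simp only at h5
        show (a:ℕ) = iv + 1
        omega

lemma ndeg_spine {L : ℕ} {d : ℕ → ℕ} {a : Fin (L+2)} (h1 : 1 ≤ (a:ℕ)) (h2 : (a:ℕ) ≤ L) (hda : 2 ≤ d a) :
    ndeg (Cat L d) (Sum.inl a) = d (a:ℕ) := by
  rw [ndeg, neighborSet_spine h1 h2]
  rw [Set.ncard_union_eq]
  · rw [Set.ncard_pair (by simp [Fin.ext_iff])]
    have hr : (Set.range (fun j : Fin (d ((a:ℕ) - 1 + 1) - 2) =>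
        (Sum.inr ⟨⟨(a:ℕ) - 1, by omega⟩, j⟩ : CatV L d))).ncard = d ((a:ℕ) - 1 + 1) - 2 := by
      rw [← Set.image_univ, Set.ncard_image_of_injective _ (fun x y hxy => by simpa using hxy),
        Set.ncard_univ]
      simp
    rw [hr]
    have h3 : (a:ℕ) - 1 + 1 = (a:ℕ) := by omega
    rw [h3]
    omega
  · rw [Set.disjoint_left]
    rintro x (rfl | rfl) <;> simp

lemma ndeg_le_card {V : Type*} [Fintype V] (G : SimpleGraph V) (v : V) :
    ndeg G v ≤ Fintype.card V := by
  have := Set.ncard_le_ncard (Set.subset_univ (G.neighborSet v)) (Set.toFinite _)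
  simpa [ndeg, Set.ncard_univ] using this

lemma le_sigmaG {V : Type*} [Fintype V] (G : SimpleGraph V) {x y : V} (h : G.Adj x y) :
    ndeg G x + ndeg G y - 1 ≤ sigmaG G := by
  apply le_csSup
  · refine ⟨2 * Fintype.card V, ?_⟩
    rintro n ⟨x, y, -, rfl⟩
    have := ndeg_le_card G x
    have := ndeg_le_card G y
    omega
  · exact ⟨x, y, h, rfl⟩

theorem twoSided_of_shorter (ℓ : ℕ) (hℓ : 2 ≤ ℓ) (d : ℕ → ℕ)
    (hd : ∀ i, 1 ≤ i → i ≤ ℓ → 2 ≤ d i)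
    (κ : ℕ) (hκ : sigmaG (Cat ℓ d) ≤ κ)
    (h : TwoSidedPrecolorable (ℓ - 1) d κ) :
    TwoSidedPrecolorable ℓ d κ := by
  obtain ⟨m, rfl⟩ : ∃ m, ℓ = m + 1 := ⟨ℓ - 1, by omega⟩
  have hm1 : 1 ≤ m := by omega
  have hdm : 2 ≤ d m := hd m hm1 (by omega)
  have hdl : 2 ≤ d (m + 1) := hd (m + 1) (by omega) (le_refl _)
  have hadj : (Cat (m+1) d).Adj (Sum.inl ⟨m, by omega⟩) (Sum.inl ⟨m+1, by omega⟩) :=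
    cat_adj_inl_inl.2 (Or.inl (by simp))
  have hσ : d m + d (m + 1) - 1 ≤ sigmaG (Cat (m+1) d) := by
    have h1 : ndeg (Cat (m+1) d) (Sum.inl ⟨m, by omega⟩) = d m :=
      ndeg_spine (L := m+1) (d := d) (a := ⟨m, by omega⟩) hm1 (show m ≤ m + 1 by omega) hdm
    have h2 : ndeg (Cat (m+1) d) (Sum.inl ⟨m+1, by omega⟩) = d (m+1) :=
      ndeg_spine (L := m+1) (d := d) (a := ⟨m+1, by omega⟩) (show 1 ≤ m + 1 by omega) (show m + 1 ≤ m + 1 by omega) hdl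
    calc d m + d (m+1) - 1
        = ndeg (Cat (m+1) d) (Sum.inl ⟨m, by omega⟩) +
            ndeg (Cat (m+1) d) (Sum.inl ⟨m+1, by omega⟩) - 1 := by rw [h1, h2]
      _ ≤ sigmaG (Cat (m+1) d) := le_sigmaG _ hadj
  exact key m hm1 d hdm hdl κ (le_trans hσ hκ) h
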